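/- Let φ : R → Q be an injective ring epimorphism. Then every right Q-module M is torsion-free as a right R-module, where torsion is taken with respect to the torsion theory whose torsion class consists of the right R-modules T with T ⊗_R Q = 0. That is, Hom_R(T, M) = 0 for every right R-module T satisfying T ⊗_R Q = 0. -/

import Mathlib

open MulOpposite

universe u

/-- `φ : R →+* Q` is an epimorphism in the category of rings. -/
def IsRingEpi {R Q : Type u} [Ring R] [Ring Q] (φ : R →+* Q) : Prop :=
  ∀ (T : Type u) [Ring T] (ψ ω : Q →+* T), ψ.comp φ = ω.comp φ → ψ = ω

section NCTensor

variable (R : Type u) [Ring R] (M : Type u) [AddCommGroup M] [Module Rᵐᵒᵖ M]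
  (N : Type u) [AddCommGroup N] [Module R N]

/-- Relations defining the tensor product `M ⊗_R N` of a right `R`-module `M`
and a left `R`-module `N` over a (possibly noncommutative) ring `R`. -/
def ncRels : AddSubgroup (FreeAbelianGroup (M × N)) :=
  AddSubgroup.closure
    ({x | ∃ m m' n, x = FreeAbelianGroup.of (m + m', n) - FreeAbelianGroup.of (m, n) -
        FreeAbelianGroup.of (m', n)} ∪
     {x | ∃ m n n', x = FreeAbelianGroup.of (m, n + n') - FreeAbelianGroup.of (m, n) -
        FreeAbelianGroup.of (m, n')} ∪
     {x | ∃ (r : R) (m : M) (n : N), x = FreeAbelianGroup.of (op r • m, n) -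
        FreeAbelianGroup.of (m, r • n)})

/-- The tensor product `M ⊗_R N` of a right `R`-module and a left `R`-module over a
(possibly noncommutative) ring `R`, as an abelian group. -/
def NCTensor : Type u := FreeAbelianGroup (M × N) ⧸ ncRels R M N

instance : AddCommGroup (NCTensor R M N) :=
  QuotientAddGroup.Quotient.addCommGroup _

/-- The pure tensor `m ⊗ n` in `M ⊗_R N`. -/
def NCTensor.tmul (m : M) (n : N) : NCTensor R M N :=
  QuotientAddGroup.mk (FreeAbelianGroup.of (m, n))

end NCTensor

/-- If `φ : R → Q` is an injective ring epimorphism, then every right `Q`-module `M` is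
torsion-free as a right `R`-module: `Hom_R(T, M) = 0` for every right `R`-module `T`
with `T ⊗_R Q = 0`. -/
theorem qmodule_torsionFree {R Q : Type u} [Ring R] [Ring Q] (φ : R →+* Q)
    (hinj : Function.Injective φ) (hepi : IsRingEpi φ)
    [Module R Q] (hl : ∀ (r : R) (q : Q), r • q = φ r * q)
    (M : Type u) [AddCommGroup M] [Module Qᵐᵒᵖ M] [Module Rᵐᵒᵖ M]
    (hM : ∀ (r : R) (m : M), (op r : Rᵐᵒᵖ) • m = (op (φ r) : Qᵐᵒᵖ) • m) :
    ∀ (T : Type u) [AddCommGroup T] [Module Rᵐᵒᵖ T],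
      Subsingleton (NCTensor R T Q) → ∀ f : T →ₗ[Rᵐᵒᵖ] M, f = 0 := by
  intro T _ _ hT f
  ext t
  -- The balanced map `(t, q) ↦ (op q) • f t` descends to `T ⊗_R Q → M`.
  let g0 : FreeAbelianGroup (T × Q) →+ M :=
    FreeAbelianGroup.lift (fun p : T × Q => (op p.2 : Qᵐᵒᵖ) • f p.1)
  have hg0 : ∀ p : T × Q, g0 (FreeAbelianGroup.of p) = (op p.2 : Qᵐᵒᵖ) • f p.1 := fun p =>
    FreeAbelianGroup.lift_apply_of _ _
  have hker : ncRels R T Q ≤ g0.ker := by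
    rw [ncRels, AddSubgroup.closure_le]
    rintro x ((⟨m, m', n, rfl⟩ | ⟨m, n, n', rfl⟩) | ⟨r, m, n, rfl⟩) <;>
      simp only [SetLike.mem_coe, AddMonoidHom.mem_ker, map_sub, hg0]
    · simp [smul_add]
    · simp [op_add, add_smul]
    · rw [map_smul, hM, smul_smul, hl, op_mul, sub_self]
  let g : NCTensor R T Q →+ M :=
    QuotientAddGroup.lift (ncRels R T Q) g0 (fun x hx => hker hx)
  have h1 : f t = g (NCTensor.tmul R T Q t 1) := by
    show f t = g0 (FreeAbelianGroup.of (t, 1))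
    rw [hg0]; simp
  rw [LinearMap.zero_apply, h1, Subsingleton.elim (NCTensor.tmul R T Q t 1) 0, map_zero]
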